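/- If x ∈ ℚ[(2)] is periodic under T, i.e., T^n(x) = x for some n ≥ 1, then the denominator k of x in lowest terms satisfies gcd(k, 6) = 1; equivalently, k ≡ 1 or 5 (mod 6). -/

import Mathlib

/-- The `3x+1` function on rationals: `T x = x/2` if the numerator of `x` is even,
and `T x = (3x+1)/2` if the numerator of `x` is odd. -/
noncomputable def T (x : ℚ) : ℚ := if Even x.num then x / 2 else (3 * x + 1) / 2

lemma T_zero : T 0 = 0 := by simp [T]

local notation "v" => padicValRat 3

lemma fact3 : Fact (Nat.Prime 3) := ⟨by norm_num⟩

lemma padicValRat_two : v 2 = 0 := by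
  haveI := fact3
  have : ((2 : ℕ) : ℚ) = 2 := by norm_num
  rw [← this, padicValRat.of_nat, padicValNat.eq_zero_of_not_dvd (by norm_num)]
  simp

/-- Step lemma 1: the truncated valuation does not decrease. -/
lemma key1 {y : ℚ} (hy : y ≠ 0) (hTy : T y ≠ 0) : min (v y) 0 ≤ v (T y) := by
  haveI := fact3
  unfold T at hTy ⊢
  by_cases h : Even y.num
  · rw [if_pos h] at hTy ⊢
    rw [padicValRat.div hy (by norm_num), padicValRat_two]
    simp [min_le_left]
  · rw [if_neg h] at hTy ⊢
    have h31 : (3 * y + 1 : ℚ) ≠ 0 := by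
      intro h0; rw [h0] at hTy; simp at hTy
    have h3y : (3 * y : ℚ) ≠ 0 := by
      intro h0; exact hy (by simpa using h0)
    have hv3y : v (3 * y) = 1 + v y := by
      rw [padicValRat.mul (by norm_num) hy]
      have : ((3 : ℕ) : ℚ) = 3 := by norm_num
      rw [← this, padicValRat.self (by norm_num)]
    have hmin : min (v (3 * y)) (v 1) ≤ v (3 * y + 1) :=
      padicValRat.min_le_padicValRat_add (p := 3) h31
    rw [padicValRat.div h31 (by norm_num), padicValRat_two, padicValRat.one] at *
    rw [hv3y] at hmin
    omega

/-- Step lemma 2: on an odd step with negative valuation, the valuation strictly increases. -/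
lemma key2 {y : ℚ} (hy : y ≠ 0) (hTy : T y ≠ 0) (hodd : ¬ Even y.num)
    (hneg : v y < 0) : v y < v (T y) := by
  haveI := fact3
  unfold T at hTy ⊢
  rw [if_neg hodd] at hTy ⊢
  have h31 : (3 * y + 1 : ℚ) ≠ 0 := by
    intro h0; rw [h0] at hTy; simp at hTy
  have h3y : (3 * y : ℚ) ≠ 0 := by
    intro h0; exact hy (by simpa using h0)
  have hv3y : v (3 * y) = 1 + v y := by
    rw [padicValRat.mul (by norm_num) hy]
    have : ((3 : ℕ) : ℚ) = 3 := by norm_num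
    rw [← this, padicValRat.self (by norm_num)]
  have hge : 1 + v y ≤ v (3 * y + 1) := by
    by_cases hc : v (3 * y) = v (1 : ℚ)
    · have hmin : min (v (3 * y)) (v 1) ≤ v (3 * y + 1) :=
        padicValRat.min_le_padicValRat_add (p := 3) h31
      rw [padicValRat.one] at hc hmin
      omega
    · have := padicValRat.add_eq_min (p := 3) h31 h3y (by norm_num) hc
      rw [padicValRat.one] at this
      rw [this, hv3y]
      omega
  rw [padicValRat.div h31 (by norm_num), padicValRat_two]
  omega

theorem stmt_6 (x : ℚ) (hx : Odd x.den) (n : ℕ) (hn : 1 ≤ n) (hper : T^[n] x = x) :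
    Nat.gcd x.den 6 = 1 ∧ (x.den % 6 = 1 ∨ x.den % 6 = 5) := by
  haveI := fact3
  have h2 : ¬ 2 ∣ x.den := by
    rcases hx with ⟨k, hk⟩; omega
  -- main claim: 3 does not divide the denominator
  have h3 : ¬ 3 ∣ x.den := by
    intro hd3
    have hx0 : x ≠ 0 := by
      intro h0; rw [h0] at hd3; simp at hd3
    -- all iterates are nonzero
    have hiter0 : ∀ j, T^[j] (0 : ℚ) = 0 := fun j => Function.iterate_fixed T_zero j
    have hpern : ∀ k, T^[k * n] x = x := by
      intro k
      induction k with
      | zero => simp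
      | succ k ih =>
        rw [Nat.succ_mul, Function.iterate_add_apply, hper, ih]
    have hne : ∀ i, T^[i] x ≠ 0 := by
      intro i h0
      apply hx0
      have hle : i ≤ i * n := Nat.le_mul_of_pos_right i hn
      calc x = T^[i * n] x := (hpern i).symm
        _ = T^[i * n - i] (T^[i] x) := by
            rw [← Function.iterate_add_apply]
            congr 1; omega
        _ = 0 := by rw [h0, hiter0]
    -- valuation of x is negative
    have hnum : ¬ (3 : ℤ) ∣ x.num := by
      intro hdn
      have : (3 : ℕ) ∣ x.num.natAbs := Int.natAbs_dvd_natAbs.mpr (by simpa using hdn)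
      have := Nat.dvd_gcd this hd3
      rw [x.reduced] at this
      omega
    have hvx : v x < 0 := by
      rw [padicValRat_def, padicValInt.eq_zero_of_not_dvd hnum]
      have h1 : 1 ≤ padicValNat 3 x.den := one_le_padicValNat_of_dvd x.pos.ne' hd3
      omega
    -- the truncated valuation is monotone along the orbit
    have hmono : ∀ i, min (v (T^[i] x)) 0 ≤ min (v (T^[i+1] x)) 0 := by
      intro i
      have e : T^[i+1] x = T (T^[i] x) := Function.iterate_succ_apply' T i x
      have := key1 (hne i) (by intro h0; exact hne (i+1) (by rw [e, h0]))
      rw [← e] at this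
      omega
    have hmono' : ∀ i j, i ≤ j → min (v (T^[i] x)) 0 ≤ min (v (T^[j] x)) 0 := by
      intro i j hij
      induction j with
      | zero =>
        have h0 : i = 0 := Nat.le_zero.mp hij
        subst h0; exact le_rfl
      | succ j ih =>
        rcases Nat.lt_or_ge i (j+1) with h | h
        · exact le_trans (ih (by omega)) (hmono j)
        · have : i = j + 1 := by omega
          rw [this]
    -- hence the valuation is constantly `v x` on the cycle
    have hconst : ∀ i, i ≤ n → v (T^[i] x) = v x := by
      intro i hi
      have h1 := hmono' 0 i (by omega)
      have h2 := hmono' i n hi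
      rw [Function.iterate_zero_apply] at h1
      rw [hper] at h2
      omega
    -- every step in the cycle is an even step
    have heven : ∀ i, i < n → Even ((T^[i] x).num) := by
      intro i hi
      by_contra hodd
      have e : T^[i+1] x = T (T^[i] x) := Function.iterate_succ_apply' T i x
      have hk := key2 (hne i) (by intro h0; exact hne (i+1) (by rw [e, h0]))
        hodd (by rw [hconst i (by omega)]; exact hvx)
      rw [← e] at hk
      rw [hconst i (by omega), hconst (i+1) (by omega)] at hk
      omega
    -- so T^[i] x = x / 2^i
    have hpow : ∀ i, i ≤ n → T^[i] x = x / 2 ^ i := by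
      intro i hi
      induction i with
      | zero => simp
      | succ i ih =>
        rw [Function.iterate_succ_apply', ih (by omega), T,
          if_pos (by rw [← ih (by omega)]; exact heven i (by omega))]
        rw [div_div, pow_succ]
    have hxn := hpow n le_rfl
    rw [hper] at hxn
    have hmul : x * 2 ^ n = x := by
      conv_lhs => rw [hxn]
      field_simp
    have h21 : (2 : ℚ) ^ n = 1 := by
      have := mul_left_cancel₀ hx0 (hmul.trans (mul_one x).symm)
      exact this
    have h2n : (1 : ℚ) < 2 ^ n := one_lt_pow₀ (by norm_num) (by omega)
    linarith
  have hd2 : x.den % 2 = 1 := Nat.odd_iff.mp hx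
  have hd3 : x.den % 3 ≠ 0 := fun h => h3 (Nat.dvd_of_mod_eq_zero h)
  constructor
  · have hdvd : Nat.gcd x.den 6 ∣ 6 := Nat.gcd_dvd_right _ _
    have hg2 : ¬ 2 ∣ Nat.gcd x.den 6 := fun h => h2 (h.trans (Nat.gcd_dvd_left _ _))
    have hg3 : ¬ 3 ∣ Nat.gcd x.den 6 := fun h => h3 (h.trans (Nat.gcd_dvd_left _ _))
    have hle : Nat.gcd x.den 6 ≤ 6 := Nat.le_of_dvd (by norm_num) hdvd
    set g := Nat.gcd x.den 6 with hgdef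
    interval_cases g <;> omega
  · omega
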